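/- arXiv:2510.20226 — 2 statements merged into one kernel-verified Lean document; each statement's English description precedes it below -/
import Mathlib

section
/- In a strongly connected digraph D with the sum metric, every eccentric vertex and every contour vertex is a boundary vertex; that is, Ecc(D) ∪ Ct(D) ⊆ ∂(D). -/
variable {V : Type*}

/-- There is a directed walk of length `n` from `u` to `v`. -/
def DWalkLen (E : V → V → Prop) (u v : V) (n : ℕ) : Prop :=
  ∃ f : Fin (n + 1) → V, f 0 = u ∧ f (Fin.last n) = v ∧
    ∀ i : Fin n, E (f i.castSucc) (f i.succ)

/-- A digraph is strongly connected if every vertex reaches every other by a directed walk. -/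
def StronglyConnected (E : V → V → Prop) : Prop :=
  ∀ u v : V, ∃ n, DWalkLen E u v n

/-- Directed distance: length of a shortest directed walk. -/
noncomputable def ddist (E : V → V → Prop) (u v : V) : ℕ :=
  sInf {n | DWalkLen E u v n}

/-- Sum distance. -/
noncomputable def sd (E : V → V → Prop) (u v : V) : ℕ :=
  ddist E u v + ddist E v u

/-- Eccentricity with respect to the sum distance. -/
noncomputable def decc (E : V → V → Prop) [Fintype V] (u : V) : ℕ :=
  Finset.univ.sup (fun v => sd E u v)

/-- Radius: minimum eccentricity. -/
noncomputable def drad (E : V → V → Prop) [Fintype V] : ℕ :=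
  sInf (Set.range (decc E))

/-- Diameter: maximum eccentricity. -/
noncomputable def ddiam (E : V → V → Prop) [Fintype V] : ℕ :=
  Finset.univ.sup (decc E)

/-- `w` is a neighbour of `v` (edge in either direction). -/
def dnbr (E : V → V → Prop) (v w : V) : Prop := E v w ∨ E w v

/-- Peripheral vertices. -/
def PerSet (E : V → V → Prop) [Fintype V] : Set V := {v | decc E v = ddiam E}

/-- Eccentric vertices. -/
def EccSet (E : V → V → Prop) [Fintype V] : Set V := {v | ∃ u, sd E u v = decc E u}

/-- Contour vertices. -/
def CtSet (E : V → V → Prop) [Fintype V] : Set V :=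
  {v | ∀ u, dnbr E v u → decc E u ≤ decc E v}

/-- Boundary vertices. -/
def BdSet (E : V → V → Prop) : Set V :=
  {v | ∃ u, ∀ w, dnbr E v w → sd E u w ≤ sd E u v}

/-- Central vertices. -/
def CenterSet (E : V → V → Prop) [Fintype V] : Set V := {v | decc E v = drad E}

/-- Corona product of digraphs: attach a copy of `H` to each vertex of `D`
via bidirectional edges. -/
def dcorona {α β : Type*} (E : α → α → Prop) (F : β → β → Prop) :
    (α ⊕ α × β) → (α ⊕ α × β) → Prop
  | .inl a, .inl a' => E a a'
  | .inl a, .inr p => a = p.1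
  | .inr p, .inl a => p.1 = a
  | .inr p, .inr q => p.1 = q.1 ∧ F p.2 q.2

theorem ecc_union_ct_subset_boundary {V : Type*} [Fintype V] (E : V → V → Prop)
    (hD : StronglyConnected E) :
    EccSet E ∪ CtSet E ⊆ BdSet E := by
  rintro v (⟨u, hu⟩ | hv)
  · exact ⟨u, fun w _ => hu ▸ Finset.le_sup (Finset.mem_univ w)⟩
  · have hne : Finset.univ.Nonempty := ⟨v, Finset.mem_univ v⟩
    obtain ⟨u, -, hu⟩ := Finset.exists_mem_eq_sup Finset.univ hne (fun w => sd E v w)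
    refine ⟨u, fun w hw => ?_⟩
    have h1 : sd E u w ≤ decc E w := by
      rw [show sd E u w = sd E w u from add_comm _ _]
      exact Finset.le_sup (Finset.mem_univ u)
    have h2 : decc E w ≤ decc E v := hv w hw
    have h3 : sd E u v = decc E v := by
      rw [show sd E u v = sd E v u from add_comm _ _]
      exact hu.symm
    omega
end

section
/- Let D and H be strongly connected digraphs with |V(H)| ≥ 2, and form the corona product D ⊙ H by attaching a copy H_i of H to each vertex u_i of D via bidirectional edges. With respect to the sum metric, the distance between two vertices u_i, u_j of D in D ⊙ H equals sd_D(u_i, u_j), and the distance from u_i to a vertex v_s^j of H_j equals sd_D(u_i, u_j) + 2. -/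
variable {V : Type*}

lemma dwalk_zero {E : V → V → Prop} {u v : V} : DWalkLen E u v 0 ↔ u = v := by
  constructor
  · rintro ⟨f, h0, hl, _⟩
    rw [← h0, ← hl, Subsingleton.elim (0 : Fin 1) (Fin.last 0)]
  · rintro rfl
    exact ⟨fun _ => u, rfl, rfl, fun i => i.elim0⟩

lemma dwalk_succ {E : V → V → Prop} {u v : V} {n : ℕ} :
    DWalkLen E u v (n + 1) ↔ ∃ w, E u w ∧ DWalkLen E w v n := by
  constructor
  · rintro ⟨f, h0, hl, he⟩
    refine ⟨f 1, ?_, fun i => f i.succ, rfl, ?_, fun i => ?_⟩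
    · have := he 0
      rw [← h0]
      simpa using this
    · show f (Fin.last n).succ = v
      rw [Fin.succ_last]
      exact hl
    · show E (f i.castSucc.succ) (f i.succ.succ)
      rw [Fin.succ_castSucc]
      exact he i.succ
  · rintro ⟨w, hw, g, h0, hl, he⟩
    refine ⟨Fin.cases u g, by simp, ?_, fun i => ?_⟩
    · rw [← Fin.succ_last]
      simpa only [Fin.cases_succ] using hl
    · induction i using Fin.cases with
      | zero =>
        show E u (g 0)
        rw [h0]
        exact hw
      | succ j =>
        show E (g j.castSucc) (g j.succ)
        exact he j

lemma dwalk_append {E : V → V → Prop} {u v w : V} {n m : ℕ}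
    (h1 : DWalkLen E u v n) (h2 : DWalkLen E v w m) : DWalkLen E u w (n + m) := by
  induction n generalizing u with
  | zero =>
    rw [dwalk_zero] at h1
    subst h1
    simpa using h2
  | succ k ih =>
    rw [dwalk_succ] at h1
    obtain ⟨x, hx, hw⟩ := h1
    have : k + 1 + m = (k + m) + 1 := by omega
    rw [this, dwalk_succ]
    exact ⟨x, hx, ih hw⟩

lemma dwalk_one {E : V → V → Prop} {u v : V} (h : E u v) : DWalkLen E u v 1 :=
  dwalk_succ.mpr ⟨v, h, dwalk_zero.mpr rfl⟩

/-- Projection of corona vertices to the base digraph. -/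
def cproj {α β : Type*} : α ⊕ α × β → α := Sum.elim id Prod.fst

lemma lift_walk {α β : Type*} {E : α → α → Prop} {F : β → β → Prop} :
    ∀ {n : ℕ} {i j : α}, DWalkLen E i j n →
      DWalkLen (dcorona E F) (Sum.inl i) (Sum.inl j) n := by
  intro n
  induction n with
  | zero =>
    intro i j h
    rw [dwalk_zero] at h
    subst h
    exact dwalk_zero.mpr rfl
  | succ k ih =>
    intro i j h
    rw [dwalk_succ] at h
    obtain ⟨w, hw, h⟩ := h
    exact dwalk_succ.mpr ⟨Sum.inl w, hw, ih h⟩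

lemma proj_walk_inl {α β : Type*} {E : α → α → Prop} {F : β → β → Prop} :
    ∀ n : ℕ,
      (∀ (a j : α), DWalkLen (dcorona E F) (Sum.inl a) (Sum.inl j) n →
        ∃ m, m ≤ n ∧ DWalkLen E a j m) ∧
      (∀ (p : α × β) (j : α), DWalkLen (dcorona E F) (Sum.inr p) (Sum.inl j) n →
        ∃ m, m + 1 ≤ n ∧ DWalkLen E p.1 j m) := by
  intro n
  induction n with
  | zero =>
    constructor
    · intro a j h
      rw [dwalk_zero] at h
      obtain rfl : a = j := Sum.inl_injective h
      exact ⟨0, le_refl 0, dwalk_zero.mpr rfl⟩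
    · intro p j h
      rw [dwalk_zero] at h
      simp at h
  | succ k ih =>
    constructor
    · intro a j h
      rw [dwalk_succ] at h
      obtain ⟨w, hxw, hw⟩ := h
      match w, hxw with
      | .inl a', he =>
        obtain ⟨m, hle, hm⟩ := ih.1 a' j hw
        exact ⟨m + 1, by omega, dwalk_succ.mpr ⟨a', he, hm⟩⟩
      | .inr p, he =>
        obtain ⟨m, hle, hm⟩ := ih.2 p j hw
        have hpe : a = p.1 := he
        exact ⟨m, by omega, by rw [hpe]; exact hm⟩
    · intro p j h
      rw [dwalk_succ] at h
      obtain ⟨w, hxw, hw⟩ := h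
      match w, hxw with
      | .inl a, he =>
        obtain ⟨m, hle, hm⟩ := ih.1 a j hw
        have hpe : p.1 = a := he
        exact ⟨m, by omega, by rw [hpe]; exact hm⟩
      | .inr q, he =>
        obtain ⟨m, hle, hm⟩ := ih.2 q j hw
        have hpe : p.1 = q.1 := he.1
        exact ⟨m, by omega, by rw [hpe]; exact hm⟩

lemma proj_walk_inr {α β : Type*} {E : α → α → Prop} {F : β → β → Prop} :
    ∀ n : ℕ,
      (∀ (a j : α) (s : β), DWalkLen (dcorona E F) (Sum.inl a) (Sum.inr (j, s)) n →
        ∃ m, m + 1 ≤ n ∧ DWalkLen E a j m) ∧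
      (∀ (p : α × β) (j : α) (s : β), DWalkLen (dcorona E F) (Sum.inr p) (Sum.inr (j, s)) n →
        ∃ m, m ≤ n ∧ DWalkLen E p.1 j m) := by
  intro n
  induction n with
  | zero =>
    constructor
    · intro a j s h
      rw [dwalk_zero] at h
      simp at h
    · intro p j s h
      rw [dwalk_zero] at h
      obtain rfl : p = (j, s) := Sum.inr_injective h
      exact ⟨0, le_refl 0, dwalk_zero.mpr rfl⟩
  | succ k ih =>
    constructor
    · intro a j s h
      rw [dwalk_succ] at h
      obtain ⟨w, hxw, hw⟩ := h
      match w, hxw with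
      | .inl a', he =>
        obtain ⟨m, hle, hm⟩ := ih.1 a' j s hw
        exact ⟨m + 1, by omega, dwalk_succ.mpr ⟨a', he, hm⟩⟩
      | .inr p, he =>
        obtain ⟨m, hle, hm⟩ := ih.2 p j s hw
        have hpe : a = p.1 := he
        exact ⟨m, by omega, by rw [hpe]; exact hm⟩
    · intro p j s h
      rw [dwalk_succ] at h
      obtain ⟨w, hxw, hw⟩ := h
      match w, hxw with
      | .inl a, he =>
        obtain ⟨m, hle, hm⟩ := ih.1 a j s hw
        have hpe : p.1 = a := he
        exact ⟨m, by omega, by rw [hpe]; exact hm⟩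
      | .inr q, he =>
        obtain ⟨m, hle, hm⟩ := ih.2 q j s hw
        have hpe : p.1 = q.1 := he.1
        exact ⟨m, by omega, by rw [hpe]; exact hm⟩

lemma ddist_walk {E : V → V → Prop} (hD : StronglyConnected E) (u v : V) :
    DWalkLen E u v (ddist E u v) :=
  Nat.sInf_mem (hD u v)

lemma ddist_le {E : V → V → Prop} {u v : V} {n : ℕ} (h : DWalkLen E u v n) :
    ddist E u v ≤ n :=
  Nat.sInf_le h

lemma ddist_inl_inl {α β : Type*} {E : α → α → Prop} {F : β → β → Prop}
    (hD : StronglyConnected E) (i j : α) :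
    ddist (dcorona E F) (Sum.inl i) (Sum.inl j) = ddist E i j := by
  have hd := ddist_walk hD i j
  apply le_antisymm
  · exact ddist_le (lift_walk hd)
  · have h1 : DWalkLen (dcorona E F) (Sum.inl i) (Sum.inl j)
        (ddist (dcorona E F) (Sum.inl i) (Sum.inl j)) :=
      Nat.sInf_mem (s := {n | DWalkLen (dcorona E F) (Sum.inl i) (Sum.inl j) n}) ⟨_, lift_walk (F := F) hd⟩
    obtain ⟨m, hle, hm⟩ := (proj_walk_inl _).1 i j h1
    have := ddist_le hm
    omega

lemma ddist_inl_inr {α β : Type*} {E : α → α → Prop} {F : β → β → Prop}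
    (hD : StronglyConnected E) (i j : α) (s : β) :
    ddist (dcorona E F) (Sum.inl i) (Sum.inr (j, s)) = ddist E i j + 1 := by
  have hd := ddist_walk hD i j
  have hwalk : DWalkLen (dcorona E F) (Sum.inl i) (Sum.inr (j, s)) (ddist E i j + 1) :=
    dwalk_append (lift_walk hd) (dwalk_one rfl)
  apply le_antisymm
  · exact ddist_le hwalk
  · have h1 : DWalkLen (dcorona E F) (Sum.inl i) (Sum.inr (j, s))
        (ddist (dcorona E F) (Sum.inl i) (Sum.inr (j, s))) :=
      Nat.sInf_mem (s := {n | DWalkLen (dcorona E F) (Sum.inl i) (Sum.inr (j, s)) n}) ⟨_, hwalk⟩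
    obtain ⟨m, hle, hm⟩ := (proj_walk_inr _).1 i j s h1
    have := ddist_le hm
    omega

lemma ddist_inr_inl {α β : Type*} {E : α → α → Prop} {F : β → β → Prop}
    (hD : StronglyConnected E) (i j : α) (s : β) :
    ddist (dcorona E F) (Sum.inr (j, s)) (Sum.inl i) = ddist E j i + 1 := by
  have hd := ddist_walk hD j i
  have hwalk : DWalkLen (dcorona E F) (Sum.inr (j, s)) (Sum.inl i) (ddist E j i + 1) := by
    have : ddist E j i + 1 = 1 + ddist E j i := by omega
    rw [this]
    exact dwalk_append (dwalk_one (v := Sum.inl j) rfl) (lift_walk hd)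
  apply le_antisymm
  · exact ddist_le hwalk
  · have h1 : DWalkLen (dcorona E F) (Sum.inr (j, s)) (Sum.inl i)
        (ddist (dcorona E F) (Sum.inr (j, s)) (Sum.inl i)) :=
      Nat.sInf_mem (s := {n | DWalkLen (dcorona E F) (Sum.inr (j, s)) (Sum.inl i) n}) ⟨_, hwalk⟩
    obtain ⟨m, hle, hm⟩ := (proj_walk_inl _).2 (j, s) i h1
    have := ddist_le (show DWalkLen E j i m from hm)
    omega

theorem dcorona_sd_inl {α β : Type*} [Fintype β] (E : α → α → Prop) (F : β → β → Prop)
    (hD : StronglyConnected E) (hH : StronglyConnected F)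
    (hβ : 2 ≤ Fintype.card β) :
    (∀ i j : α, sd (dcorona E F) (Sum.inl i) (Sum.inl j) = sd E i j) ∧
    (∀ (i j : α) (s : β),
      sd (dcorona E F) (Sum.inl i) (Sum.inr (j, s)) = sd E i j + 2) := by
  constructor
  · intro i j
    simp only [sd, ddist_inl_inl hD]
  · intro i j s
    simp only [sd, ddist_inl_inr hD, ddist_inr_inl hD]
    omega
end
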